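/- Let 0 < q < 1/2 and let f be a solution of Schilling's problem. If f vanishes on the interval (0, q), then f is identically zero. -/

import Mathlib

theorem schilling_vanish_pos_interval (q : ℝ) (hq : 0 < q) (hq1 : q < 1 / 2)
    (f : ℝ → ℝ)
    (heq : ∀ x : ℝ, f (q * x) = 1 / (4 * q) * (f (x - 1) + f (x + 1) + 2 * f x))
    (hQ : ∀ x : ℝ, |x| > q / (1 - q) → f x = 0)
    (h0 : ∀ x : ℝ, 0 < x → x < q → f x = 0) :
    ∀ x : ℝ, f x = 0 := by
  have h1q : (0:ℝ) < 1 - q := by linarith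
  set Q : ℝ := q / (1 - q) with hQdef
  have hQpos : 0 < Q := div_pos hq h1q
  have hQlt1 : Q < 1 := by rw [hQdef, div_lt_one h1q]; linarith
  have hqQ : q < Q := by rw [hQdef, lt_div_iff₀ h1q]; nlinarith
  have h4q : (0:ℝ) < 4 * q := by linarith
  have hz : ∀ x : ℝ, Q < |x| → f x = 0 := fun x hx => hQ x hx
  -- f 0 = 0
  have f0 : f 0 = 0 := by
    have h := heq 0
    have e1 : f (0 - 1 : ℝ) = 0 := hz _ (by rw [show (0:ℝ) - 1 = -1 by ring, abs_neg, abs_one]; linarith)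
    have e2 : f (0 + 1 : ℝ) = 0 := hz _ (by rw [show (0:ℝ) + 1 = 1 by ring, abs_one]; linarith)
    rw [mul_zero, e1, e2] at h
    have key : f 0 * (4 * q - 2) = 0 := by
      field_simp at h
      linarith
    rcases mul_eq_zero.mp key with h' | h'
    · exact h'
    · linarith
  -- rel : forward relation on nonnegatives
  have rel : ∀ u : ℝ, 0 ≤ u → f (q * (u + 1)) = 1 / (4 * q) * f u := by
    intro u hu
    have h := heq (u + 1)
    have e1 : u + 1 - 1 = u := by ring
    have e2 : f (u + 1 + 1) = 0 := hz _ (by rw [abs_of_pos (by linarith)]; linarith)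
    have e3 : f (u + 1) = 0 := hz _ (by rw [abs_of_pos (by linarith)]; linarith)
    rw [e1, e2, e3] at h
    rw [h]; ring
  have fq : f q = 0 := by
    have h := rel 0 le_rfl
    rw [f0] at h
    simpa using h
  have fle : ∀ y : ℝ, 0 < y → y ≤ q → f y = 0 := by
    intro y hy0 hyq
    rcases lt_or_eq_of_le hyq with h | h
    · exact h0 y hy0 h
    · rw [h]; exact fq
  -- main induction : f = 0 on (0, Q)
  have main : ∀ n : ℕ, ∀ y : ℝ, 0 < y → y < Q → (Q - q) * q ^ n ≤ Q - y → f y = 0 := by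
    intro n
    induction n with
    | zero =>
      intro y hy0 hyQ hle
      simp only [pow_zero, mul_one] at hle
      exact fle y hy0 (by linarith)
    | succ n ih =>
      intro y hy0 hyQ hle
      by_cases hyq : y ≤ q
      · exact fle y hy0 hyq
      · push_neg at hyq
        set u : ℝ := y / q - 1 with hu
        have hqy : q * (u + 1) = y := by rw [hu]; field_simp; ring
        have hu0 : 0 < u := by
          rw [hu]; rw [lt_sub_iff_add_lt, zero_add, lt_div_iff₀ hq]; linarith
        have hQu : Q - u = (Q - y) / q := by
          rw [hu, hQdef]; field_simp; ring
        have huQ : u < Q := by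
          have h' : (0:ℝ) < (Q - y) / q := div_pos (by linarith) hq
          have hp : (0:ℝ) < Q - u := by rw [hQu]; exact h'
          linarith
        have hcond : (Q - q) * q ^ n ≤ Q - u := by
          rw [hQu, le_div_iff₀ hq]
          calc (Q - q) * q ^ n * q = (Q - q) * q ^ (n + 1) := by ring
            _ ≤ Q - y := hle
        have hfu : f u = 0 := ih u hu0 huQ hcond
        have h := rel u hu0.le
        rw [hqy, hfu] at h
        rw [h]; ring
  have pos0Q : ∀ y : ℝ, 0 < y → y < Q → f y = 0 := by
    intro y hy0 hyQ
    obtain ⟨n, hn⟩ := exists_pow_lt_of_lt_one (show (0:ℝ) < (Q - y) / (Q - q) by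
      exact div_pos (by linarith) (by linarith)) (show q < 1 by linarith)
    refine main n y hy0 hyQ ?_
    rw [lt_div_iff₀ (show (0:ℝ) < Q - q by linarith)] at hn
    nlinarith [hn]
  -- f = 0 on (0,1) except possibly Q
  have fA : ∀ s : ℝ, 0 < s → s < 1 → s ≠ Q → f s = 0 := by
    intro s hs0 hs1 hsQ
    rcases lt_trichotomy s Q with h | h | h
    · exact pos0Q s hs0 h
    · exact absurd h hsQ
    · exact hz s (by rw [abs_of_pos hs0]; exact h)
  -- backward relation on nonpositives
  have rel2 : ∀ w : ℝ, w ≤ 0 → f (q * (w - 1)) = 1 / (4 * q) * f w := by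
    intro w hw
    have h := heq (w - 1)
    have e1 : w - 1 + 1 = w := by ring
    have e2 : f (w - 1 - 1) = 0 := hz _ (by
      rw [abs_of_neg (by linarith)]; linarith)
    have e3 : f (w - 1) = 0 := hz _ (by
      rw [abs_of_neg (by linarith)]; linarith)
    rw [e1, e2, e3] at h
    rw [h]; ring
  -- relation from vanishing on (0,q)
  have rel1 : ∀ t : ℝ, -1 < t → t < 0 → f t = -2 * f (t + 1) := by
    intro t ht1 ht0
    have h := heq (t + 1)
    have e1 : t + 1 - 1 = t := by ring
    have e2 : f (t + 1 + 1) = 0 := hz _ (by rw [abs_of_pos (by linarith)]; linarith)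
    have e0 : f (q * (t + 1)) = 0 := h0 _ (by nlinarith) (by nlinarith)
    rw [e1, e2, e0] at h
    have h' : f t + 2 * f (t + 1) = 0 := by
      field_simp at h
      linarith
    linarith
  -- f (Q - 1) = 0
  have fQ1 : f (Q - 1) = 0 := by
    have h := rel2 (Q - 1) (by linarith)
    set a : ℝ := q * (Q - 1 - 1) with hadef
    have ha0 : a < 0 := by
      have : Q - 1 - 1 < 0 := by linarith
      nlinarith
    have ha1 : -1 < a := by
      have h1 : Q - 1 - 1 > -2 := by linarith
      nlinarith
    by_cases haQ : a = Q - 1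
    · have hq3 : q = 1 / 3 := by
        rw [hadef, hQdef] at haQ
        field_simp at haQ
        nlinarith [haQ]
      rw [haQ] at h
      rw [hq3] at h
      norm_num at h
      linarith
    · have h5 := rel1 a ha1 ha0
      have ha1Q : a + 1 ≠ Q := fun hc => haQ (by linarith)
      have hfa1 : f (a + 1) = 0 := fA (a + 1) (by linarith) (by linarith) ha1Q
      have hfa : f a = 0 := by rw [h5, hfa1]; ring
      rw [hfa] at h
      have := h.symm
      field_simp at this
      simpa using this
  -- f = 0 on (-1, 0)
  have negf : ∀ t : ℝ, -1 < t → t < 0 → f t = 0 := by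
    intro t ht1 ht0
    by_cases htQ : t = Q - 1
    · rw [htQ]; exact fQ1
    · have h := rel1 t ht1 ht0
      have : f (t + 1) = 0 := fA (t + 1) (by linarith) (by linarith)
        (fun hc => htQ (by linarith))
      rw [this] at h
      rw [h]; ring
  -- f Q = 0
  have fQ : f Q = 0 := by
    have h := rel1 (Q - 1) (by linarith) (by linarith)
    rw [show Q - 1 + 1 = Q by ring, fQ1] at h
    linarith
  intro x
  rcases lt_trichotomy x 0 with hx | hx | hx
  · rcases le_or_gt x (-1) with h | h
    · exact hz x (by rw [abs_of_neg hx]; linarith)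
    · exact negf x h hx
  · rw [hx]; exact f0
  · rcases lt_trichotomy x Q with h | h | h
    · exact pos0Q x hx h
    · rw [h]; exact fQ
    · exact hz x (by rw [abs_of_pos hx]; exact h)
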